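/- For f, g in SL(2,C), \beta(f^2) = (\beta(f) + 4) \beta(f) and \gamma(f^2, g^2) = (\beta(f) + 4)(\beta(g) + 4) \gamma(f,g). -/

import Mathlib

open Matrix

namespace Stmt5

/-- `β(h) = (tr h)² - 4` -/
noncomputable def β (h : SpecialLinearGroup (Fin 2) ℂ) : ℂ :=
  (Matrix.trace (h : Matrix (Fin 2) (Fin 2) ℂ)) ^ 2 - 4

/-- `γ(f,g) = tr (f g f⁻¹ g⁻¹) - 2` -/
noncomputable def γ (f g : SpecialLinearGroup (Fin 2) ℂ) : ℂ :=
  Matrix.trace ((f * g * f⁻¹ * g⁻¹ : SpecialLinearGroup (Fin 2) ℂ) :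
    Matrix (Fin 2) (Fin 2) ℂ) - 2

/-- `β(f²) = (β(f)+4) β(f)` and `γ(f²,g²) = (β(f)+4)(β(g)+4) γ(f,g)`. -/
theorem beta_sq_and_gamma_sq (f g : SpecialLinearGroup (Fin 2) ℂ) :
    β (f ^ 2) = (β f + 4) * β f ∧
    γ (f ^ 2) (g ^ 2) = (β f + 4) * (β g + 4) * γ f g := by
  set a := (f : Matrix (Fin 2) (Fin 2) ℂ) 0 0 with ha
  set b := (f : Matrix (Fin 2) (Fin 2) ℂ) 0 1 with hb
  set c := (f : Matrix (Fin 2) (Fin 2) ℂ) 1 0 with hc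
  set d := (f : Matrix (Fin 2) (Fin 2) ℂ) 1 1 with hd
  set p := (g : Matrix (Fin 2) (Fin 2) ℂ) 0 0 with hp
  set q := (g : Matrix (Fin 2) (Fin 2) ℂ) 0 1 with hq
  set r := (g : Matrix (Fin 2) (Fin 2) ℂ) 1 0 with hr
  set s := (g : Matrix (Fin 2) (Fin 2) ℂ) 1 1 with hs
  have hF : (f : Matrix (Fin 2) (Fin 2) ℂ) = !![a, b; c, d] := by
    rw [ha, hb, hc, hd]; exact (Matrix.eta_fin_two _)
  have hG : (g : Matrix (Fin 2) (Fin 2) ℂ) = !![p, q; r, s] := by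
    rw [hp, hq, hr, hs]; exact (Matrix.eta_fin_two _)
  have hdf : a * d - b * c = 1 := by
    have := f.2
    rw [Matrix.det_fin_two] at this
    simpa [ha, hb, hc, hd] using this
  have hdg : p * s - q * r = 1 := by
    have := g.2
    rw [Matrix.det_fin_two] at this
    simpa [hp, hq, hr, hs] using this
  have hFi : ((f⁻¹ : SpecialLinearGroup (Fin 2) ℂ) : Matrix (Fin 2) (Fin 2) ℂ)
      = !![d, -b; -c, a] := by
    rw [Matrix.SpecialLinearGroup.coe_inv, hF, Matrix.adjugate_fin_two]
    simp
  have hGi : ((g⁻¹ : SpecialLinearGroup (Fin 2) ℂ) : Matrix (Fin 2) (Fin 2) ℂ)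
      = !![s, -q; -r, p] := by
    rw [Matrix.SpecialLinearGroup.coe_inv, hG, Matrix.adjugate_fin_two]
    simp
  constructor
  · simp only [β, sq, Matrix.SpecialLinearGroup.coe_mul, hF, Matrix.mul_fin_two,
      Matrix.trace_fin_two_of]
    linear_combination (4 - 4*d^2 - 4*b*c - 4*a*d - 4*a^2) * hdf
  · simp only [γ, β, sq, _root_.mul_inv_rev, Matrix.SpecialLinearGroup.coe_mul, hF, hG, hFi, hGi,
      Matrix.mul_fin_two, Matrix.trace_fin_two_of]
    linear_combination (4*s^2 + 4*q*r*s^2 + 2*q^2*r^2 + 8*p*s - 4*p*s^3 + 4*p*q*r*s + 4*p^2 - 6*p^2*s^2 + 4*p^2*q*r - 4*p^3*s + 2*d^2*q*r*s^2 - 2*d^2*p*s^3 + 4*d^2*p*q*r*s - 4*d^2*p^2*s^2 + 2*d^2*p^2*q*r - 2*d^2*p^3*s - 2*b*c*q^2*r^2 + 4*b*c*p*q*r*s - 2*b*c*p^2*s^2 + 4*a*d*q*r*s^2 + 2*a*d*q^2*r^2 - 4*a*d*p*s^3 + 4*a*d*p*q*r*s - 6*a*d*p^2*s^2 + 4*a*d*p^2*q*r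 - 4*a*d*p^3*s + 2*a^2*q*r*s^2 - 2*a^2*p*s^3 + 4*a^2*p*q*r*s - 4*a^2*p^2*s^2 + 2*a^2*p^2*q*r - 2*a^2*p^3*s) * hdf + (2 - 4*s^2 - 2*q*r - 6*p*s - 4*p^2 - 2*d^2*s^2 - 4*d^2*p*s - 2*d^2*p^2 - 4*b*c*s^2 - 8*b*c*p*s - 4*b*c*p^2 - 2*a^2*s^2 - 4*a^2*p*s - 2*a^2*p^2) * hdg

end Stmt5
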